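/- Let λ > -2, λ ≠ 1, and let u be a real C¹ function on [0,1] with u(0) = 0, u'(ρ) ≥ 0 on [0,1), and u not identically zero, satisfying ∫₀¹ (θ(ρ)/W(θ,χ)(ρ)) · (1/(1-ρ²)) · (2(λ-1)ρu'(ρ) + (λ(1+λ)-2)u(ρ)) dρ = 0, where θ(ρ)/W(θ,χ)(ρ) = -(ρ³(1-ρ²))/(3(1+ρ²)). Then we obtain a contradiction; in particular no such u exists. -/

import Mathlib

open Set MeasureTheory intervalIntegral Filter

theorem integral_identity_contradiction (lam : ℝ) (h2 : -2 < lam) (h1 : lam ≠ 1)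
    (u : ℝ → ℝ)
    (hu : ContDiffOn ℝ 1 u (Set.Icc (0:ℝ) 1))
    (h0 : u 0 = 0)
    (hmono : ∀ ρ ∈ Set.Ico (0:ℝ) 1, 0 ≤ deriv u ρ)
    (hne : ∃ ρ ∈ Set.Icc (0:ℝ) 1, u ρ ≠ 0)
    (hint : ∫ ρ in (0:ℝ)..1,
        (-(ρ^3 * (1 - ρ^2)) / (3 * (1 + ρ^2))) * (1 / (1 - ρ^2))
          * (2 * (lam - 1) * ρ * deriv u ρ + (lam * (1 + lam) - 2) * u ρ) = 0) :
    False := by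
  set dW : ℝ → ℝ := derivWithin u (Icc 0 1) with hdW
  have hUD : UniqueDiffOn ℝ (Icc (0:ℝ) 1) := uniqueDiffOn_Icc one_pos
  have hdWc : ContinuousOn dW (Icc 0 1) := hu.continuousOn_derivWithin hUD le_rfl
  have hdWeq : ∀ x ∈ Ioo (0:ℝ) 1, dW x = deriv u x := fun x hx =>
    derivWithin_of_mem_nhds (mem_nhds_iff.2 ⟨Ioo 0 1, Ioo_subset_Icc_self, isOpen_Ioo, hx⟩)
  -- monotonicity of u
  have humono : MonotoneOn u (Icc (0:ℝ) 1) := by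
    apply monotoneOn_of_deriv_nonneg (convex_Icc 0 1) hu.continuousOn
    · rw [interior_Icc]
      exact fun x hx => ((hu.differentiableOn one_ne_zero x (Ioo_subset_Icc_self hx)).differentiableAt
        (mem_nhds_iff.2 ⟨Ioo 0 1, Ioo_subset_Icc_self, isOpen_Ioo, hx⟩)).differentiableWithinAt
    · rw [interior_Icc]
      exact fun x hx => hmono x ⟨hx.1.le, hx.2⟩
  have hunn : ∀ x ∈ Icc (0:ℝ) 1, 0 ≤ u x := fun x hx => by
    have := humono (left_mem_Icc.2 one_pos.le) hx hx.1
    rwa [h0] at this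
  have hu1 : 0 < u 1 := by
    obtain ⟨ρ0, hρ0, hρ0ne⟩ := hne
    have h1' := humono hρ0 (right_mem_Icc.2 one_pos.le) hρ0.2
    have := hunn ρ0 hρ0
    rcases lt_or_eq_of_le this with h | h
    · linarith
    · exact absurd h.symm hρ0ne
  -- a point in Ioo with u positive
  have hex : ∃ x ∈ Ioo (0:ℝ) 1, 0 < u x := by
    have hc : Tendsto u (nhdsWithin 1 (Ioo (0:ℝ) 1)) (nhds (u 1)) :=
      ((hu.continuousOn 1 (right_mem_Icc.2 one_pos.le)).mono_left
        (nhdsWithin_mono _ Ioo_subset_Icc_self))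
    have hev : ∀ᶠ x in nhdsWithin 1 (Ioo (0:ℝ) 1), 0 < u x :=
      hc.eventually (eventually_gt_nhds hu1)
    have hmem : ∀ᶠ x in nhdsWithin 1 (Ioo (0:ℝ) 1), x ∈ Ioo (0:ℝ) 1 :=
      eventually_mem_nhdsWithin
    have := right_nhdsWithin_Ioo_neBot (one_pos : (0:ℝ) < 1)
    obtain ⟨x, hx1, hx2⟩ := (hev.and hmem).exists
    exact ⟨x, hx2, hx1⟩
  -- the simplified integrand
  set h : ℝ → ℝ := fun x => -(x^3) / (3 * (1 + x^2)) * (2 * x * dW x + (lam + 2) * u x)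
    with hh
  have hhc : ContinuousOn h (Icc 0 1) := by
    rw [hh]
    refine ContinuousOn.mul (ContinuousOn.div (by fun_prop) (by fun_prop)
      (fun x _ => by positivity)) ?_
    exact ((continuousOn_const.mul continuous_id.continuousOn).mul hdWc).add
        (continuousOn_const.mul hu.continuousOn)
  -- relate integrals
  have hcong : ∫ ρ in (0:ℝ)..1,
        (-(ρ^3 * (1 - ρ^2)) / (3 * (1 + ρ^2))) * (1 / (1 - ρ^2))
          * (2 * (lam - 1) * ρ * deriv u ρ + (lam * (1 + lam) - 2) * u ρ)
      = ∫ ρ in (0:ℝ)..1, (lam - 1) * h ρ := by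
    apply intervalIntegral.integral_congr_ae
    have hone : ∀ᵐ x : ℝ, x ≠ 1 := by
      have : (volume : Measure ℝ) {(1:ℝ)} = 0 := measure_singleton 1
      exact (ae_iff.2 (by simp [this]))
    filter_upwards [hone] with x hx1 hx
    rw [uIoc_of_le one_pos.le] at hx
    have hxI : x ∈ Ioo (0:ℝ) 1 := ⟨hx.1, lt_of_le_of_ne hx.2 hx1⟩
    rw [← hdWeq x hxI]
    have h1x : (1:ℝ) - x^2 ≠ 0 := by nlinarith [hxI.1, hxI.2]
    have h2x : (1:ℝ) + x^2 > 0 := by positivity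
    simp only [hh]
    field_simp
    ring
  rw [hcong, intervalIntegral.integral_const_mul] at hint
  have hs : lam - 1 ≠ 0 := sub_ne_zero.2 h1
  have hint0 : ∫ ρ in (0:ℝ)..1, h ρ = 0 := by
    rcases mul_eq_zero.1 hint with h | h
    · exact absurd h hs
    · exact h
  -- h ≤ 0 on Ioc and h < 0 at the point from hex
  have hle : ∀ x ∈ Ioc (0:ℝ) 1, h x ≤ 0 := by
    intro x hx
    have hxI : x ∈ Icc (0:ℝ) 1 := ⟨hx.1.le, hx.2⟩
    have hu0 := hunn x hxI
    have hd0 : 0 ≤ dW x := by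
      rcases eq_or_lt_of_le hx.2 with h | h
      · -- x = 1 : use continuity of dW and nonnegativity on Ioo
        subst h
        have hc : Tendsto dW (nhdsWithin 1 (Ioo (0:ℝ) 1)) (nhds (dW 1)) :=
          (hdWc 1 (right_mem_Icc.2 one_pos.le)).mono_left
            (nhdsWithin_mono _ Ioo_subset_Icc_self)
        have := right_nhdsWithin_Ioo_neBot (one_pos : (0:ℝ) < 1)
        refine le_of_tendsto_of_tendsto tendsto_const_nhds hc ?_
        filter_upwards [eventually_mem_nhdsWithin] with y hy
        rw [hdWeq y hy]
        exact hmono y ⟨hy.1.le, hy.2⟩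
      · rw [hdWeq x ⟨hx.1, h⟩]
        exact hmono x ⟨hx.1.le, h⟩
    have hl2 : (0:ℝ) < lam + 2 := by linarith
    have hc : 0 ≤ x^3 / (3 * (1 + x^2)) := div_nonneg (pow_nonneg hx.1.le 3) (by positivity)
    have : 0 ≤ 2 * x * dW x + (lam + 2) * u x := by
      have : 0 ≤ 2 * x * dW x := mul_nonneg (by linarith [hx.1]) hd0
      nlinarith
    simp only [hh, neg_div, neg_mul]
    exact neg_nonpos.2 (mul_nonneg hc this)
  have hlt : ∃ c ∈ Icc (0:ℝ) 1, h c < 0 := by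
    obtain ⟨x, hxI, hux⟩ := hex
    refine ⟨x, Ioo_subset_Icc_self hxI, ?_⟩
    have hd0 : 0 ≤ dW x := by
      rw [hdWeq x hxI]; exact hmono x ⟨hxI.1.le, hxI.2⟩
    have hl2 : (0:ℝ) < lam + 2 := by linarith
    have hx0 : 0 < x := hxI.1
    have hc : 0 < x^3 / (3 * (1 + x^2)) :=
      div_pos (pow_pos hx0 3) (by positivity)
    have hpos : 0 < 2 * x * dW x + (lam + 2) * u x := by
      have : 0 ≤ 2 * x * dW x := mul_nonneg (by linarith) hd0
      nlinarith
    simp only [hh, neg_div, neg_mul]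
    exact neg_neg_iff_pos.2 (mul_pos hc hpos)
  have := intervalIntegral.integral_lt_integral_of_continuousOn_of_le_of_exists_lt
    one_pos hhc continuousOn_const hle hlt
  simp [hint0] at this
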